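/- Consider the ternary QUANT iteration with unit teacher vector w* ∈ ℝⁿ and suppose w* ∉ Q₃. Then: (i) any subsequential limit of the normalized iterates lies in the closure of Cone(w*); precisely, if (t_k) is strictly increasing, y^{t_k} ≠ 0 for all k, and y^{t_k}/‖y^{t_k}‖ converges to some u ∈ ℝⁿ, then u belongs to the closure of Cone(w*); (ii) if moreover Cone(w*) is regular (all coordinates of w* nonzero and of pairwise distinct absolute values), then y^t ∈ Cone(w*) for all but finitely many t. -/

import Mathlib

open Real Filter Set

/-- Euclidean norm of a vector in `Fin k → ℝ`. -/
noncomputable def euclNorm {k : ℕ} (x : Fin k → ℝ) : ℝ := Real.sqrt (∑ i, x i ^ 2)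

/-- ℓ¹ norm of a vector in `Fin k → ℝ`. -/
noncomputable def l1Norm {k : ℕ} (x : Fin k → ℝ) : ℝ := ∑ i, |x i|

/-- `s` is a ternary sign vector, i.e. `s ∈ {−1,0,1}ⁿ`. -/
def IsTern {k : ℕ} (s : Fin k → ℝ) : Prop := ∀ i, s i = -1 ∨ s i = 0 ∨ s i = 1

/-- `x` belongs to the ternary quantized set `Q₃ = {δ·s : δ ≥ 0, s ∈ {−1,0,1}ⁿ}`. -/
def InQ3 {k : ℕ} (x : Fin k → ℝ) : Prop :=
  ∃ δ : ℝ, 0 ≤ δ ∧ ∃ s : Fin k → ℝ, IsTern s ∧ x = δ • s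

/-- `u` is a normalized ternary projection of `y`: `u = s/‖s‖` for a nonzero
ternary sign vector `s` maximizing `⟨y, s'⟩/‖s'‖` over nonzero ternary `s'`. -/
noncomputable def IsNTernProj {k : ℕ} (y u : Fin k → ℝ) : Prop :=
  ∃ s : Fin k → ℝ, IsTern s ∧ s ≠ 0 ∧
    (∀ s' : Fin k → ℝ, IsTern s' → s' ≠ 0 →
      (∑ i, y i * s' i) / euclNorm s' ≤ (∑ i, y i * s i) / euclNorm s) ∧
    u = fun i => s i / euclNorm s

/-- The cone of `x`: vectors in the orthant of `x` whose coordinates are ordered in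
absolute value in the same way as those of `x`. -/
def ConeOf {k : ℕ} (x : Fin k → ℝ) : Set (Fin k → ℝ) :=
  {y | (∀ i, Real.sign (y i) = Real.sign (x i)) ∧
       ∀ i j, Real.sign (|y j| - |y i|) = Real.sign (|x j| - |x i|)}

/-- Ternary QUANT iteration with `w* ∉ Q₃`: (i) any subsequential limit of the
normalized auxiliary iterates lies in the closure of `Cone(w*)`;
(ii) if `Cone(w*)` is regular (all coordinates of `w*` nonzero with pairwise distinct
absolute values), then `y^t ∈ Cone(w*)` for all but finitely many `t`. -/


lemma euclNorm_nonneg {k : ℕ} (x : Fin k → ℝ) : 0 ≤ euclNorm x := Real.sqrt_nonneg _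

lemma abs_le_euclNorm {k : ℕ} (x : Fin k → ℝ) (i : Fin k) : |x i| ≤ euclNorm x := by
  rw [euclNorm, ← Real.sqrt_sq_eq_abs]
  exact Real.sqrt_le_sqrt (Finset.single_le_sum (f := fun j => x j ^ 2)
    (fun j _ => sq_nonneg _) (Finset.mem_univ i))

lemma euclNorm_pos_of_ne_zero {k : ℕ} (x : Fin k → ℝ) (hx : x ≠ 0) : 0 < euclNorm x := by
  obtain ⟨i, hi⟩ := Function.ne_iff.mp hx
  have h1 : 0 < |x i| := abs_pos.mpr hi
  exact lt_of_lt_of_le h1 (abs_le_euclNorm x i)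

/-- toward-zero move stays bounded -/
lemma abs_sub_le_max (u δ : ℝ) (h : 0 ≤ u * δ) : |u - δ| ≤ max |u| |δ| := by
  rcases mul_nonneg_iff.mp h with ⟨hu, hδ⟩ | ⟨hu, hδ⟩
  · rcases abs_cases (u - δ) with ⟨h1, _⟩ | ⟨h1, _⟩
    · exact le_max_of_le_left (by rw [h1, abs_of_nonneg hu]; linarith)
    · exact le_max_of_le_right (by rw [h1, abs_of_nonneg hδ]; linarith)
  · rcases abs_cases (u - δ) with ⟨h1, _⟩ | ⟨h1, _⟩
    · exact le_max_of_le_right (by rw [h1, abs_of_nonpos hδ]; linarith)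
    · exact le_max_of_le_left (by rw [h1, abs_of_nonpos hu]; linarith)

lemma mono_key (η : ℕ → ℝ) (hη0 : ∀ t, 0 < η t)
    (hηsum : Tendsto (fun T => ∑ t ∈ Finset.range T, η t) atTop atTop)
    (d Gf : ℕ → ℝ) (hG : Tendsto Gf atTop atTop) (α β : ℝ) (hα : 0 < α) (hβ : 0 ≤ β)
    (hstep : ∀ t, d t + η t * α ≤ d (t + 1) ∨ (Gf t ≤ d t ∧ d t - β ≤ d (t + 1))) :
    Tendsto d atTop atTop := by
  rw [tendsto_atTop]
  intro M
  obtain ⟨T₀, hT₀⟩ := (hG.eventually_ge_atTop (M + β)).exists_forall_of_atTop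
  set S : ℕ → ℝ := fun T => ∑ t ∈ Finset.range T, η t with hS
  -- Claim 1 : there is T₁ ≥ T₀ with M ≤ d T₁
  have claim1 : ∃ T₁, T₀ ≤ T₁ ∧ M ≤ d T₁ := by
    by_contra hcon
    push_neg at hcon
    have hup : ∀ t, T₀ ≤ t → d T₀ + α * (S t - S T₀) ≤ d t := by
      intro t ht
      induction t, ht using Nat.le_induction with
      | base => simp
      | succ t ht ih =>
        have hdt : d t < M := hcon t ht
        have hstep' : d t + η t * α ≤ d (t + 1) := by
          rcases hstep t with h | ⟨h1, _⟩
          · exact h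
          · exact absurd (lt_of_lt_of_le hdt (le_trans (by linarith) (le_trans (hT₀ t ht) h1))) (lt_irrefl _)
        have : S (t + 1) = S t + η t := Finset.sum_range_succ η t
        nlinarith [hη0 t]
    obtain ⟨t, ht1, ht2⟩ := ((hηsum.eventually_ge_atTop (S T₀ + (M - d T₀) / α)).and
      (eventually_ge_atTop T₀)).exists
    have h1 := hup t ht2
    have : (M - d T₀) / α * α = M - d T₀ := div_mul_cancel₀ _ (ne_of_gt hα)
    have := hcon t ht2
    nlinarith
  obtain ⟨T₁, hT₁0, hT₁⟩ := claim1
  have claim2 : ∀ t, T₁ ≤ t → M ≤ d t := by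
    intro t ht
    induction t, ht using Nat.le_induction with
    | base => exact hT₁
    | succ t ht ih =>
      rcases hstep t with h | ⟨h1, h2⟩
      · nlinarith [hη0 t]
      · have := hT₀ t (le_trans hT₁0 ht)
        linarith
  exact eventually_atTop.mpr ⟨T₁, claim2⟩

lemma sum_mul_update {n : ℕ} (y s : Fin n → ℝ) (i : Fin n) (b : ℝ) :
    ∑ j, y j * Function.update s i b j = (∑ j, y j * s j) + y i * (b - s i) := by
  have h : ∑ j, (y j * Function.update s i b j - y j * s j) = y i * (b - s i) := by
    rw [Finset.sum_eq_single_of_mem i (Finset.mem_univ i)]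
    · rw [Function.update_self]; ring
    · intro j _ hj
      rw [Function.update_of_ne hj]; ring
  rw [Finset.sum_sub_distrib] at h
  linarith

lemma sum_sq_update {n : ℕ} (s : Fin n → ℝ) (i : Fin n) (b : ℝ) :
    ∑ j, Function.update s i b j ^ 2 = (∑ j, s j ^ 2) + (b ^ 2 - s i ^ 2) := by
  have h : ∑ j, (Function.update s i b j ^ 2 - s j ^ 2) = b ^ 2 - s i ^ 2 := by
    rw [Finset.sum_eq_single_of_mem i (Finset.mem_univ i)]
    · rw [Function.update_self]
    · intro j _ hj
      rw [Function.update_of_ne hj]; ring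
  rw [Finset.sum_sub_distrib] at h
  linarith

lemma proj_facts {n : ℕ} (y u : Fin n → ℝ) (h : IsNTernProj y u) :
    ∃ (k : ℕ) (s : Fin n → ℝ), 1 ≤ k ∧ k ≤ n ∧ IsTern s ∧ s ≠ 0 ∧
      euclNorm s = Real.sqrt k ∧
      (∀ i, u i = s i / Real.sqrt k) ∧
      (∑ i, y i * s i) / Real.sqrt k = (∑ i, y i * u i) ∧
      0 ≤ (∑ i, y i * u i) ∧ (∀ i, 0 ≤ y i * s i) ∧
      (∀ i, |y i| ≤ (∑ i, y i * u i)) ∧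
      (∀ i, s i ≠ 0 → (Real.sqrt k - Real.sqrt ((k : ℝ) - 1)) * (∑ i, y i * u i) ≤ |y i|) ∧
      (∀ i, s i = 0 → |y i| ≤ (Real.sqrt ((k : ℝ) + 1) - Real.sqrt k) * (∑ i, y i * u i)) := by
  obtain ⟨s, htern, hs0, hmax, hu⟩ := h
  set k : ℕ := (Finset.univ.filter fun i => s i ≠ 0).card with hk
  have habs : ∀ i, s i ≠ 0 → |s i| = 1 := by
    intro i hi
    rcases htern i with h1 | h1 | h1 <;> simp [h1] at hi ⊢
  have hsq : ∀ i, s i ^ 2 = if s i ≠ 0 then 1 else 0 := by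
    intro i
    rcases htern i with h1 | h1 | h1 <;> simp [h1]
  have hsumsq : (∑ i, s i ^ 2) = (k : ℝ) := by
    rw [hk]
    rw [Finset.sum_congr rfl (fun i _ => hsq i)]
    simp [Finset.sum_ite, Finset.sum_const]
  have hNs : euclNorm s = Real.sqrt k := by rw [euclNorm, hsumsq]
  obtain ⟨i₀, hi₀⟩ := Function.ne_iff.mp hs0
  have hi₀' : s i₀ ≠ 0 := by simpa using hi₀
  have hk1 : 1 ≤ k := by
    rw [hk, Nat.one_le_iff_ne_zero, ← Nat.pos_iff_ne_zero, Finset.card_pos]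
    exact ⟨i₀, by simp [hi₀']⟩
  have hkn : k ≤ n := le_trans (Finset.card_le_univ _) (by simp)
  have hkR : (1 : ℝ) ≤ (k : ℝ) := by exact_mod_cast hk1
  have hNpos : 0 < Real.sqrt k := Real.sqrt_pos.mpr (by linarith)
  set G : ℝ := ∑ i, y i * u i with hG
  have hGs : (∑ i, y i * s i) / Real.sqrt k = G := by
    rw [hG, hu, ← hNs]
    rw [Finset.sum_div]
    exact Finset.sum_congr rfl (fun i _ => by ring)
  -- maximality restated
  have hmax' : ∀ s' : Fin n → ℝ, IsTern s' → s' ≠ 0 →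
      (∑ i, y i * s' i) / euclNorm s' ≤ G := by
    intro s' h1 h2
    calc (∑ i, y i * s' i) / euclNorm s' ≤ (∑ i, y i * s i) / euclNorm s := hmax s' h1 h2
    _ = G := by rw [hNs, hGs]
  -- F1 : 0 ≤ y i * s i
  have hF1 : ∀ i, 0 ≤ y i * s i := by
    intro i
    rcases eq_or_ne (s i) 0 with h0 | h0
    · simp [h0]
    · set s' := Function.update s i (-(s i)) with hs'
      have htern' : IsTern s' := by
        intro j
        rcases eq_or_ne j i with rfl | hj
        · rcases htern j with h1 | h1 | h1 <;> simp [hs', h1]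
        · rw [hs', Function.update_of_ne hj]; exact htern j
      have hne' : s' ≠ 0 := by
        rw [Function.ne_iff]
        exact ⟨i, by simp [hs', h0]⟩
      have hsum' : ∑ j, y j * s' j = (∑ j, y j * s j) - 2 * (y i * s i) := by
        rw [hs', sum_mul_update]; ring
      have hnorm' : euclNorm s' = Real.sqrt k := by
        rw [euclNorm, hs', sum_sq_update, hsumsq]
        ring_nf
      have := hmax' s' htern' hne'
      rw [hnorm', hsum', div_le_iff₀ hNpos] at this
      have h2 : (∑ j, y j * s j) = G * Real.sqrt k := by
        rw [← hGs]; field_simp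
      nlinarith
  -- |y i| ≤ G
  have hyG : ∀ i, |y i| ≤ G := by
    intro i
    set b : ℝ := if 0 ≤ y i then 1 else -1 with hb
    set s' := Function.update (0 : Fin n → ℝ) i b with hs'
    have htern' : IsTern s' := by
      intro j
      rcases eq_or_ne j i with rfl | hj
      · rw [hs', Function.update_self, hb]; split <;> simp
      · rw [hs', Function.update_of_ne hj]; simp
    have hne' : s' ≠ 0 := by
      rw [Function.ne_iff]
      refine ⟨i, by rw [hs', Function.update_self, hb]; split <;> norm_num⟩
    have hsum' : ∑ j, y j * s' j = |y i| := by
      rw [hs', sum_mul_update]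
      simp only [Pi.zero_apply, mul_zero, Finset.sum_const_zero, sub_zero, zero_add, hb]
      rcases le_or_gt 0 (y i) with h1 | h1
      · rw [if_pos h1, abs_of_nonneg h1]; ring
      · rw [if_neg (not_le.mpr h1), abs_of_neg h1]; ring
    have hnorm' : euclNorm s' = 1 := by
      rw [euclNorm, hs', sum_sq_update]
      simp only [Pi.zero_apply]
      have : b ^ 2 = 1 := by rw [hb]; split <;> norm_num
      rw [this]
      simp
    have := hmax' s' htern' hne'
    rwa [hnorm', hsum', div_one] at this
  have hG0 : 0 ≤ G := le_trans (abs_nonneg (y i₀)) (hyG i₀)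
  refine ⟨k, s, hk1, hkn, htern, hs0, hNs, by rw [hu, hNs]; intro i; rfl, hGs, hG0, hF1, hyG, ?_, ?_⟩
  -- F2
  · intro i hi
    have hyis : y i * s i = |y i| := by
      have := hF1 i
      have h2 : |y i * s i| = |y i| := by rw [abs_mul, habs i hi, mul_one]
      rw [← h2, abs_of_nonneg this]
    rcases eq_or_lt_of_le hk1 with hk1' | hk2
    · -- k = 1
      have hkk : k = 1 := hk1'.symm
      have hcard : (Finset.univ.filter fun j => s j ≠ 0) = {i} := by
        apply Finset.eq_singleton_iff_unique_mem.mpr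
        constructor
        · simp [hi]
        · intro j hj
          by_contra hji
          have h2 : ({i, j} : Finset (Fin n)) ⊆ Finset.univ.filter fun j => s j ≠ 0 := by
            intro x hx
            simp at hx hj ⊢
            rcases hx with rfl | rfl
            · exact hi
            · exact hj
          have h3 : ({i, j} : Finset (Fin n)).card = 2 := by
            rw [Finset.card_insert_of_notMem (by simp [Ne.symm hji]), Finset.card_singleton]
          have := Finset.card_le_card h2
          rw [h3, ← hk] at this
          omega
      have hsum1 : (∑ j, y j * s j) = |y i| := by
        rw [Finset.sum_eq_single_of_mem i (Finset.mem_univ i)]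
        · exact hyis
        · intro j _ hj
          have : s j = 0 := by
            by_contra hc
            have : j ∈ (Finset.univ.filter fun j => s j ≠ 0) := by simp [hc]
            rw [hcard] at this
            simp at this
            exact hj this
          rw [this, mul_zero]
      have hGi : G = |y i| := by
        rw [← hGs, hsum1, hkk]
        simp
      rw [hkk, hGi]
      norm_num
    · -- k ≥ 2
      have hk2R : (2 : ℝ) ≤ (k : ℝ) := by exact_mod_cast hk2
      set s' := Function.update s i 0 with hs'
      have htern' : IsTern s' := by
        intro j
        rcases eq_or_ne j i with rfl | hj
        · rw [hs', Function.update_self]; tauto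
        · rw [hs', Function.update_of_ne hj]; exact htern j
      have hne' : s' ≠ 0 := by
        obtain ⟨j, hj, hji⟩ := Finset.exists_mem_ne (by omega : 1 < (Finset.univ.filter fun j => s j ≠ 0).card) i
        simp only [Finset.mem_filter] at hj
        rw [Function.ne_iff]
        exact ⟨j, by rw [hs', Function.update_of_ne hji]; exact hj.2⟩
      have hsum' : ∑ j, y j * s' j = Real.sqrt k * G - |y i| := by
        rw [hs', sum_mul_update]
        have h2 : (∑ j, y j * s j) = Real.sqrt k * G := by
          rw [← hGs]; field_simp
        rw [h2]
        linear_combination -hyis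
      have hnorm' : euclNorm s' = Real.sqrt ((k : ℝ) - 1) := by
        rw [euclNorm, hs', sum_sq_update, hsumsq, hsq i]
        simp only [hi, if_pos, ne_eq, not_false_eq_true, if_true]
        norm_num [sub_eq_add_neg]
      have hN'pos : 0 < Real.sqrt ((k : ℝ) - 1) := Real.sqrt_pos.mpr (by linarith)
      have := hmax' s' htern' hne'
      rw [hnorm', hsum', div_le_iff₀ hN'pos] at this
      nlinarith [this]
  -- F3
  · intro i hi
    rcases eq_or_ne (y i) 0 with hy0 | hy0
    · rw [hy0]
      simp only [abs_zero]
      apply mul_nonneg _ hG0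
      have := Real.sqrt_le_sqrt (by linarith : (k : ℝ) ≤ (k : ℝ) + 1)
      linarith
    · set b : ℝ := if 0 ≤ y i then 1 else -1 with hb
      set s' := Function.update s i b with hs'
      have htern' : IsTern s' := by
        intro j
        rcases eq_or_ne j i with rfl | hj
        · rw [hs', Function.update_self, hb]; split <;> simp
        · rw [hs', Function.update_of_ne hj]; exact htern j
      have hne' : s' ≠ 0 := by
        rw [Function.ne_iff]
        refine ⟨i, by rw [hs', Function.update_self, hb]; split <;> norm_num⟩
      have hyb : y i * b = |y i| := by
        rw [hb]
        rcases le_or_gt 0 (y i) with h1 | h1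
        · rw [if_pos h1, abs_of_nonneg h1]; ring
        · rw [if_neg (not_le.mpr h1), abs_of_neg h1]; ring
      have hsum' : ∑ j, y j * s' j = Real.sqrt k * G + |y i| := by
        rw [hs', sum_mul_update, hi]
        have h2 : (∑ j, y j * s j) = Real.sqrt k * G := by
          rw [← hGs]; field_simp
        rw [h2]
        rw [sub_zero, hyb]
      have hnorm' : euclNorm s' = Real.sqrt ((k : ℝ) + 1) := by
        rw [euclNorm, hs', sum_sq_update, hsumsq, hsq i]
        have : b ^ 2 = 1 := by rw [hb]; split <;> norm_num
        simp [hi, this]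
      have hN'pos : 0 < Real.sqrt ((k : ℝ) + 1) := Real.sqrt_pos.mpr (by linarith)
      have := hmax' s' htern' hne'
      rw [hnorm', hsum', div_le_iff₀ hN'pos] at this
      nlinarith [this]


lemma sqrt_strict_concave (j : ℝ) (hj : 1 ≤ j) :
    Real.sqrt (j - 1) + Real.sqrt (j + 1) < 2 * Real.sqrt j := by
  have h1 : Real.sqrt (j - 1) * Real.sqrt (j + 1) = Real.sqrt ((j - 1) * (j + 1)) :=
    (Real.sqrt_mul (by linarith) _).symm
  have h2 : Real.sqrt ((j - 1) * (j + 1)) < j := by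
    have hlt : (j - 1) * (j + 1) < j ^ 2 := by nlinarith
    calc Real.sqrt ((j - 1) * (j + 1)) < Real.sqrt (j ^ 2) :=
          Real.sqrt_lt_sqrt (by nlinarith) hlt
      _ = j := Real.sqrt_sq (by linarith)
  have ha := Real.sq_sqrt (show (0:ℝ) ≤ j - 1 by linarith)
  have hb := Real.sq_sqrt (show (0:ℝ) ≤ j + 1 by linarith)
  have hcsq := Real.sq_sqrt (show (0:ℝ) ≤ j by linarith)
  have hc1 : 1 ≤ Real.sqrt j := by
    rw [show (1:ℝ) = Real.sqrt 1 by simp]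
    exact Real.sqrt_le_sqrt hj
  nlinarith [Real.sqrt_nonneg (j - 1), Real.sqrt_nonneg (j + 1),
    sq_nonneg (Real.sqrt (j - 1) + Real.sqrt (j + 1) - 2 * Real.sqrt j),
    sq_nonneg (Real.sqrt (j - 1) + Real.sqrt (j + 1) + 2 * Real.sqrt j)]

lemma tern_mem_image {n : ℕ} (s : Fin n → ℝ) (hs : IsTern s) :
    s ∈ (Finset.univ : Finset (Fin n → Fin 3)).image (fun f i => ((f i : ℕ) : ℝ) - 1) := by
  rw [Finset.mem_image]
  refine ⟨fun i => if s i = -1 then 0 else if s i = 0 then 1 else 2, Finset.mem_univ _, ?_⟩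
  funext i
  rcases hs i with h | h | h <;> norm_num [h]

lemma gamma_exists {n : ℕ} (hn : 1 ≤ n) (wstar : Fin n → ℝ)
    (hws : ∑ i, wstar i ^ 2 = 1) (hQ : ¬ InQ3 wstar) :
    ∃ γ : ℝ, 0 < γ ∧ ∀ s : Fin n → ℝ, IsTern s → s ≠ 0 →
      (∑ i, wstar i * s i) / euclNorm s ≤ 1 - γ := by
  have hlt : ∀ s : Fin n → ℝ, IsTern s → s ≠ 0 →
      (∑ i, wstar i * s i) / euclNorm s < 1 := by
    intro s hs hs0
    by_contra hcon
    push_neg at hcon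
    set N := euclNorm s with hN
    have hNpos : 0 < N := euclNorm_pos_of_ne_zero s hs0
    have hN2 : N ^ 2 = ∑ i, s i ^ 2 := Real.sq_sqrt (Finset.sum_nonneg fun i _ => sq_nonneg _)
    have hip : N ≤ ∑ i, wstar i * s i := by
      rw [le_div_iff₀ hNpos, one_mul] at hcon
      exact hcon
    have hsum : ∑ i, (wstar i - s i / N) ^ 2 ≤ 0 := by
      have hexp : ∑ i, (wstar i - s i / N) ^ 2
          = (∑ i, wstar i ^ 2) - (2 / N) * (∑ i, wstar i * s i) + (∑ i, s i ^ 2) / N ^ 2 := by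
        rw [Finset.mul_sum, Finset.sum_div, ← Finset.sum_sub_distrib, ← Finset.sum_add_distrib]
        refine Finset.sum_congr rfl fun i _ => ?_
        field_simp
        ring
      rw [hexp, hws, ← hN2]
      have h1 : N ^ 2 / N ^ 2 = 1 := div_self (by positivity)
      have h2 : (2 / N) * (∑ i, wstar i * s i) ≥ (2 / N) * N := by
        apply mul_le_mul_of_nonneg_left hip (by positivity)
      have h3 : (2 / N) * N = 2 := by field_simp
      linarith
    have hzero : ∀ i, wstar i = s i / N := by
      intro i
      have := (Finset.sum_eq_zero_iff_of_nonneg (fun i _ => sq_nonneg (wstar i - s i / N))).mp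
        (le_antisymm hsum (Finset.sum_nonneg fun i _ => sq_nonneg _)) i (Finset.mem_univ i)
      have h4 : wstar i - s i / N = 0 := by
        exact pow_eq_zero_iff (by norm_num) |>.mp this
      linarith
    exact hQ ⟨1 / N, by positivity, s, hs, funext fun i => by
      rw [hzero i, Pi.smul_apply, smul_eq_mul]; ring⟩
  -- finite set of values
  classical
  set F : Finset (Fin n → ℝ) :=
    (Finset.univ : Finset (Fin n → Fin 3)).image (fun f i => ((f i : ℕ) : ℝ) - 1) with hF
  set Fne : Finset (Fin n → ℝ) := F.filter (· ≠ 0) with hFne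
  set vals : Finset ℝ := Fne.image (fun s => (∑ i, wstar i * s i) / euclNorm s) with hvals
  have hone : (fun _ : Fin n => (1 : ℝ)) ∈ Fne := by
    rw [hFne, Finset.mem_filter]
    constructor
    · exact tern_mem_image _ (fun i => by norm_num)
    · intro h
      have := congrFun h ⟨0, hn⟩
      norm_num at this
  have hvne : vals.Nonempty := ⟨_, Finset.mem_image_of_mem _ hone⟩
  refine ⟨1 - vals.max' hvne, ?_, ?_⟩
  · have hmem := vals.max'_mem hvne
    obtain ⟨s, hs, hval⟩ := Finset.mem_image.mp hmem
    have hs' := Finset.mem_filter.mp hs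
    have hstern : IsTern s := by
      obtain ⟨f, _, hf⟩ := Finset.mem_image.mp hs'.1
      intro i
      have hfi : ((f i : ℕ) : ℝ) - 1 = s i := congrFun hf i
      have h3 : (f i : ℕ) = 0 ∨ (f i : ℕ) = 1 ∨ (f i : ℕ) = 2 := by
        have := (f i).isLt
        omega
      rcases h3 with h | h | h <;> rw [← hfi, h] <;> norm_num
    have := hlt s hstern hs'.2
    rw [hval] at this
    linarith
  · intro s hs hs0
    have hmem : (∑ i, wstar i * s i) / euclNorm s ∈ vals := by
      exact Finset.mem_image_of_mem _ (Finset.mem_filter.mpr ⟨tern_mem_image s hs, hs0⟩)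
    have := Finset.le_max' vals _ hmem
    linarith
noncomputable def sgn' (x : ℝ) : ℝ := if 0 < x then 1 else -1

lemma sgn'_cases (x : ℝ) : sgn' x = 1 ∨ sgn' x = -1 := by
  rw [sgn']; split <;> simp

lemma mul_sgn' (x : ℝ) (hx : x ≠ 0) : x * sgn' x = |x| := by
  rw [sgn']
  rcases lt_trichotomy x 0 with h | h | h
  · rw [if_neg (by linarith), abs_of_neg h]; ring
  · exact absurd h hx
  · rw [if_pos h, abs_of_pos h]; ring

lemma core {n : ℕ} (hn : 1 ≤ n) (wstar : Fin n → ℝ) (hws : euclNorm wstar = 1)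
    (hQ : ¬ InQ3 wstar) (c : ℝ) (hc0 : 0 < c)
    (η : ℕ → ℝ) (ηbar : ℝ) (hη0 : ∀ t, 0 < η t) (hηb : ∀ t, η t ≤ ηbar)
    (hηsum : Tendsto (fun T => ∑ t ∈ Finset.range T, η t) atTop atTop)
    (y w : ℕ → Fin n → ℝ)
    (hproj : ∀ t, IsNTernProj (y t) (w t))
    (hy : ∀ t i, y (t + 1) i = y t i + η t * c * (wstar i - w t i)) :
    (∀ i, wstar i ≠ 0 → Tendsto (fun t => y t i * sgn' (wstar i)) atTop atTop) ∧
    (∀ i j, wstar i ≠ 0 → wstar j ≠ 0 → |wstar i| < |wstar j| →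
      Tendsto (fun t => y t j * sgn' (wstar j) - y t i * sgn' (wstar i)) atTop atTop) ∧
    (∀ i j, wstar i ≠ 0 → wstar j ≠ 0 → |wstar i| = |wstar j| →
      ∃ B, ∀ t, |y t j * sgn' (wstar j) - y t i * sgn' (wstar i)| ≤ B) ∧
    (∀ i, wstar i = 0 → ∃ B, ∀ t, |y t i| ≤ B) ∧
    Tendsto (fun t => euclNorm (y t)) atTop atTop := by
  classical
  have hηbar0 : 0 < ηbar := lt_of_lt_of_le (hη0 0) (hηb 0)
  have hws2 : ∑ i, wstar i ^ 2 = 1 := Real.sqrt_eq_one.mp hws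
  have hwsabs : ∀ i, |wstar i| ≤ 1 := by
    intro i
    have h1 : wstar i ^ 2 ≤ 1 := by
      rw [← hws2]
      exact Finset.single_le_sum (f := fun j => wstar j ^ 2) (fun j _ => sq_nonneg _)
        (Finset.mem_univ i)
    by_contra hcon
    push_neg at hcon
    nlinarith [sq_abs (wstar i)]
  obtain ⟨γ, hγ0, hγ⟩ := gamma_exists hn wstar hws2 hQ
  choose k s hk1 hkn htern hs0 hNs hu hGs hG0 hF1 hyle hF2 hF3 using
    fun t => proj_facts (y t) (w t) (hproj t)
  have hkR : ∀ t, (1:ℝ) ≤ (k t : ℝ) := fun t => by exact_mod_cast hk1 t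
  have hNpos : ∀ t, (0:ℝ) < Real.sqrt (k t) := fun t => Real.sqrt_pos.mpr (by linarith [hkR t])
  have h1k : ∀ t, 1 ≤ Real.sqrt (k t) := by
    intro t
    rw [show (1:ℝ) = Real.sqrt 1 by simp]
    exact Real.sqrt_le_sqrt (hkR t)
  have hsabs : ∀ t i, |s t i| ≤ 1 := by
    intro t i; rcases htern t i with h | h | h <;> simp [h]
  have hwabs : ∀ t i, |w t i| ≤ 1 := by
    intro t i
    rw [hu t i, abs_div, abs_of_pos (hNpos t), div_le_one (hNpos t)]
    exact le_trans (hsabs t i) (h1k t)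
  have hyw0 : ∀ t i, 0 ≤ y t i * w t i := by
    intro t i
    rw [hu t i, show y t i * (s t i / Real.sqrt (k t)) = (y t i * s t i) / Real.sqrt (k t) by ring]
    exact div_nonneg (hF1 t i) (Real.sqrt_nonneg _)
  -- inner product with wstar grows
  have hiplb : ∀ t, (∑ i, y 0 i * wstar i) + c * γ * (∑ r ∈ Finset.range t, η r)
      ≤ ∑ i, y t i * wstar i := by
    intro t
    induction t with
    | zero => simp
    | succ t ih =>
      have hstep : ∑ i, y (t+1) i * wstar i
          = (∑ i, y t i * wstar i) + η t * c * (1 - ∑ i, wstar i * w t i) := by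
        have h1 : ∀ i, y (t+1) i * wstar i
            = y t i * wstar i + η t * c * (wstar i ^ 2 - wstar i * w t i) := by
          intro i; rw [hy]; ring
        rw [Finset.sum_congr rfl fun i _ => h1 i, Finset.sum_add_distrib, ← Finset.mul_sum,
          Finset.sum_sub_distrib, hws2]
      have hwwle : ∑ i, wstar i * w t i ≤ 1 - γ := by
        have h1 : ∑ i, wstar i * w t i = (∑ i, wstar i * s t i) / euclNorm (s t) := by
          rw [hNs t, Finset.sum_div]
          exact Finset.sum_congr rfl fun i _ => by rw [hu t i]; ring
        rw [h1]
        exact hγ (s t) (htern t) (hs0 t)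
      rw [hstep, Finset.sum_range_succ]
      nlinarith [mul_pos (hη0 t) hc0, hη0 t]
  have hnpos : (0:ℝ) < (n:ℝ) := by
    have : (1:ℝ) ≤ (n:ℝ) := by exact_mod_cast hn
    linarith
  have hipub : ∀ t, ∑ i, y t i * wstar i ≤ (n:ℝ) * ∑ i, y t i * w t i := by
    intro t
    have h1 : ∀ i, y t i * wstar i ≤ ∑ j, y t j * w t j := by
      intro i
      calc y t i * wstar i ≤ |y t i * wstar i| := le_abs_self _
        _ = |y t i| * |wstar i| := abs_mul _ _
        _ ≤ |y t i| * 1 := mul_le_mul_of_nonneg_left (hwsabs i) (abs_nonneg _)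
        _ = |y t i| := mul_one _
        _ ≤ ∑ j, y t j * w t j := hyle t i
    calc ∑ i, y t i * wstar i ≤ ∑ _i : Fin n, (∑ j, y t j * w t j) :=
          Finset.sum_le_sum fun i _ => h1 i
      _ = (n:ℝ) * ∑ j, y t j * w t j := by
          rw [Finset.sum_const, Finset.card_univ, Fintype.card_fin, nsmul_eq_mul]
  have hGtend : Tendsto (fun t => ∑ i, y t i * w t i) atTop atTop := by
    apply tendsto_atTop_mono
      (f := fun t => ((∑ i, y 0 i * wstar i) + c * γ * (∑ r ∈ Finset.range t, η r)) / (n:ℝ))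
    · intro t
      rw [div_le_iff₀ hnpos]
      calc (∑ i, y 0 i * wstar i) + c * γ * (∑ r ∈ Finset.range t, η r)
          ≤ ∑ i, y t i * wstar i := hiplb t
        _ ≤ (n:ℝ) * ∑ i, y t i * w t i := hipub t
        _ = (∑ i, y t i * w t i) * (n:ℝ) := mul_comm _ _
    · exact Tendsto.atTop_div_const hnpos
        (tendsto_atTop_add_const_left _ _ (Tendsto.const_mul_atTop (mul_pos hc0 hγ0) hηsum))
  have hGub2 : ∀ t, ∑ i, y t i * w t i ≤ (n:ℝ) * euclNorm (y t) := by
    intro t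
    have h1 : ∀ i, y t i * w t i ≤ euclNorm (y t) := by
      intro i
      calc y t i * w t i ≤ |y t i * w t i| := le_abs_self _
        _ = |y t i| * |w t i| := abs_mul _ _
        _ ≤ |y t i| * 1 := mul_le_mul_of_nonneg_left (hwabs t i) (abs_nonneg _)
        _ = |y t i| := mul_one _
        _ ≤ euclNorm (y t) := abs_le_euclNorm _ i
    calc ∑ i, y t i * w t i ≤ ∑ _i : Fin n, euclNorm (y t) := Finset.sum_le_sum fun i _ => h1 i
      _ = (n:ℝ) * euclNorm (y t) := by
          rw [Finset.sum_const, Finset.card_univ, Fintype.card_fin, nsmul_eq_mul]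
  have hEtend : Tendsto (fun t => euclNorm (y t)) atTop atTop := by
    apply tendsto_atTop_mono (f := fun t => (∑ i, y t i * w t i) / (n:ℝ))
    · intro t
      rw [div_le_iff₀ hnpos]
      calc ∑ i, y t i * w t i ≤ (n:ℝ) * euclNorm (y t) := hGub2 t
        _ = euclNorm (y t) * (n:ℝ) := mul_comm _ _
    · exact Tendsto.atTop_div_const hnpos hGtend
  -- uniform constants
  set aset : Finset ℝ :=
    (Finset.Icc 1 n).image (fun j : ℕ => Real.sqrt j - Real.sqrt ((j:ℝ) - 1)) with haset
  have hasetne : aset.Nonempty :=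
    ⟨_, Finset.mem_image_of_mem _ (Finset.mem_Icc.mpr ⟨le_refl 1, hn⟩)⟩
  set a : ℝ := aset.min' hasetne with ha
  have hapos : 0 < a := by
    obtain ⟨j, hj, hjv⟩ := Finset.mem_image.mp (aset.min'_mem hasetne)
    have hj1 : 1 ≤ j := (Finset.mem_Icc.mp hj).1
    have hjR : (1:ℝ) ≤ (j:ℝ) := by exact_mod_cast hj1
    have h2 : Real.sqrt ((j:ℝ) - 1) < Real.sqrt j :=
      Real.sqrt_lt_sqrt (by linarith) (by linarith)
    rw [← ha] at hjv
    linarith [hjv.symm.le, hjv.le]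
  have hale : ∀ t, a ≤ Real.sqrt (k t) - Real.sqrt ((k t : ℝ) - 1) := fun t =>
    aset.min'_le _ (Finset.mem_image_of_mem _ (Finset.mem_Icc.mpr ⟨hk1 t, hkn t⟩))
  set eset : Finset ℝ :=
    (Finset.Icc 1 n).image
      (fun j : ℕ => 2 * Real.sqrt j - Real.sqrt ((j:ℝ) - 1) - Real.sqrt ((j:ℝ) + 1)) with heset
  have hesetne : eset.Nonempty :=
    ⟨_, Finset.mem_image_of_mem _ (Finset.mem_Icc.mpr ⟨le_refl 1, hn⟩)⟩
  set e : ℝ := eset.min' hesetne with he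
  have hepos : 0 < e := by
    obtain ⟨j, hj, hjv⟩ := Finset.mem_image.mp (eset.min'_mem hesetne)
    have hj1 : 1 ≤ j := (Finset.mem_Icc.mp hj).1
    have hjR : (1:ℝ) ≤ (j:ℝ) := by exact_mod_cast hj1
    have h2 := sqrt_strict_concave (j:ℝ) hjR
    rw [← he] at hjv
    linarith [hjv.le, hjv.symm.le]
  have hele : ∀ t, e ≤ 2 * Real.sqrt (k t) - Real.sqrt ((k t : ℝ) - 1)
      - Real.sqrt ((k t : ℝ) + 1) := fun t =>
    eset.min'_le _ (Finset.mem_image_of_mem _ (Finset.mem_Icc.mpr ⟨hk1 t, hkn t⟩))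
  have hA0 : ∀ t, 0 ≤ Real.sqrt (k t) - Real.sqrt ((k t : ℝ) - 1) := by
    intro t
    have := Real.sqrt_le_sqrt (show (k t : ℝ) - 1 ≤ (k t : ℝ) by linarith)
    linarith
  have hB0 : ∀ t, 0 ≤ Real.sqrt ((k t : ℝ) + 1) - Real.sqrt (k t) := by
    intro t
    have := Real.sqrt_le_sqrt (show (k t : ℝ) ≤ (k t : ℝ) + 1 by linarith)
    linarith
  -- sign / membership helpers
  have hyabs : ∀ t r (σ : ℝ), (σ = 1 ∨ σ = -1) → |y t r * σ| = |y t r| := by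
    intro t r σ hσ
    rcases hσ with rfl | rfl <;> simp [abs_mul]
  have hup : ∀ t r (σ : ℝ), (σ = 1 ∨ σ = -1) → σ * s t r = 1 →
      (Real.sqrt (k t) - Real.sqrt ((k t : ℝ) - 1)) * (∑ i, y t i * w t i) ≤ y t r * σ := by
    intro t r σ hσ h1
    have hσs : σ = s t r := by
      rcases hσ with rfl | rfl <;> rcases htern t r with h | h | h <;>
        rw [h] at h1 ⊢ <;> (norm_num at h1 <;> norm_num)
    have hsrne : s t r ≠ 0 := by
      intro h; rw [h, mul_zero] at h1; norm_num at h1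
    have h5 : |y t r * s t r| = |y t r| := by
      rcases htern t r with h | h | h
      · simp [h, abs_mul]
      · exact absurd h hsrne
      · simp [h]
    have hyσ : y t r * σ = |y t r| := by
      rw [hσs, ← h5, abs_of_nonneg (hF1 t r)]
    rw [hyσ]
    exact hF2 t r hsrne
  have hzero : ∀ t r (σ : ℝ), (σ = 1 ∨ σ = -1) → σ * s t r = 0 →
      |y t r| ≤ (Real.sqrt ((k t : ℝ) + 1) - Real.sqrt (k t)) * (∑ i, y t i * w t i) := by
    intro t r σ hσ h1
    have hs00 : s t r = 0 := by rcases hσ with rfl | rfl <;> linarith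
    exact hF3 t r hs00
  have hdown : ∀ t r (σ : ℝ), (σ = 1 ∨ σ = -1) → σ * s t r = -1 →
      y t r * σ ≤ -((Real.sqrt (k t) - Real.sqrt ((k t : ℝ) - 1)) * (∑ i, y t i * w t i)) := by
    intro t r σ hσ h1
    have hσs : σ = -(s t r) := by
      rcases hσ with rfl | rfl <;> rcases htern t r with h | h | h <;>
        rw [h] at h1 ⊢ <;> (norm_num at h1 <;> norm_num)
    have hsrne : s t r ≠ 0 := by
      intro h; rw [h, mul_zero] at h1; norm_num at h1
    have h5 : |y t r * s t r| = |y t r| := by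
      rcases htern t r with h | h | h
      · simp [h, abs_mul]
      · exact absurd h hsrne
      · simp [h]
    have hyσ : y t r * σ = -|y t r| := by
      rw [hσs, show y t r * -(s t r) = -(y t r * s t r) by ring, ← h5,
        abs_of_nonneg (hF1 t r)]
    rw [hyσ]
    have := hF2 t r hsrne
    linarith
  have hterncases : ∀ t r (σ : ℝ), (σ = 1 ∨ σ = -1) →
      σ * s t r = -1 ∨ σ * s t r = 0 ∨ σ * s t r = 1 := by
    intro t r σ hσ
    rcases hσ with rfl | rfl <;> rcases htern t r with h | h | h <;> rw [h] <;> norm_num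
  -- KEY2
  have hKEY2 : ∀ t i (σ : ℝ), (σ = 1 ∨ σ = -1) → 0 < σ * w t i →
      a * (∑ j, y t j * w t j) ≤ y t i * σ := by
    intro t i σ hσ hpos
    have hsi : 0 < σ * s t i := by
      have h2 : σ * w t i = (σ * s t i) / Real.sqrt (k t) := by rw [hu t i]; ring
      rw [h2] at hpos
      have h3 := mul_pos hpos (hNpos t)
      rwa [div_mul_cancel₀ _ (ne_of_gt (hNpos t))] at h3
    have hsi1 : σ * s t i = 1 := by
      rcases hterncases t i σ hσ with h | h | h <;> rw [h] at hsi <;> first | linarith | rfl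
    calc a * (∑ j, y t j * w t j)
        ≤ (Real.sqrt (k t) - Real.sqrt ((k t : ℝ) - 1)) * (∑ j, y t j * w t j) :=
          mul_le_mul_of_nonneg_right (hale t) (hG0 t)
      _ ≤ y t i * σ := hup t i σ hσ hsi1
  -- KEY (pair separation)
  have hKEY : ∀ t i j (σi σj : ℝ), (σi = 1 ∨ σi = -1) → (σj = 1 ∨ σj = -1) →
      σi * w t i < σj * w t j →
      e * (∑ r, y t r * w t r) ≤ y t j * σj - y t i * σi := by
    intro t i j σi σj hσi hσj hlt
    have hPQ : σi * s t i < σj * s t j := by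
      have h2 : ∀ (σ : ℝ) r, σ * w t r = (σ * s t r) / Real.sqrt (k t) := fun σ r => by
        rw [hu t r]; ring
      rw [h2 σi i, h2 σj j] at hlt
      have h3 := mul_lt_mul_of_pos_right hlt (hNpos t)
      rwa [div_mul_cancel₀ _ (ne_of_gt (hNpos t)),
        div_mul_cancel₀ _ (ne_of_gt (hNpos t))] at h3
    have heAB : e * (∑ r, y t r * w t r)
        ≤ ((Real.sqrt (k t) - Real.sqrt ((k t : ℝ) - 1))
          - (Real.sqrt ((k t : ℝ) + 1) - Real.sqrt (k t))) * (∑ r, y t r * w t r) := by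
      apply mul_le_mul_of_nonneg_right _ (hG0 t)
      linarith [hele t]
    rcases hterncases t j σj hσj with hP | hP | hP
    · exfalso
      rcases hterncases t i σi hσi with h | h | h <;> rw [h, hP] at hPQ <;> linarith
    · -- P = 0, so Q = -1
      have hQ' : σi * s t i = -1 := by
        rcases hterncases t i σi hσi with h | h | h
        · exact h
        · exfalso; rw [h, hP] at hPQ; linarith
        · exfalso; rw [h, hP] at hPQ; linarith
      have h1 := hzero t j σj hσj hP
      have h2 := hdown t i σi hσi hQ'
      have h3 : -((Real.sqrt ((k t : ℝ) + 1) - Real.sqrt (k t)) * (∑ r, y t r * w t r))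
          ≤ y t j * σj := by
        have h4 : -(y t j * σj) ≤ |y t j| := by
          rw [← hyabs t j σj hσj]; exact neg_le_abs _
        linarith
      linarith
    · -- P = 1
      have h1 := hup t j σj hσj hP
      have h2 : y t i * σi
          ≤ (Real.sqrt ((k t : ℝ) + 1) - Real.sqrt (k t)) * (∑ r, y t r * w t r) := by
        rcases hterncases t i σi hσi with h | h | h
        · have := hdown t i σi hσi h
          have h5 := mul_nonneg (hB0 t) (hG0 t)
          have h6 := mul_nonneg (hA0 t) (hG0 t)
          linarith
        · have := hzero t i σi hσi h
          have h4 : y t i * σi ≤ |y t i| := by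
            rw [← hyabs t i σi hσi]; exact le_abs_self _
          linarith
        · exfalso; rw [h, hP] at hPQ; linarith
      linarith
  have hηc : ∀ t, 0 ≤ η t * c := fun t => (mul_pos (hη0 t) hc0).le
  have hηcb : ∀ t, η t * c ≤ ηbar * c := fun t => mul_le_mul_of_nonneg_right (hηb t) hc0.le
  -- bound on σ * w
  have hσw : ∀ t r (σ : ℝ), (σ = 1 ∨ σ = -1) → |σ * w t r| ≤ 1 := by
    intro t r σ hσ
    rcases hσ with rfl | rfl <;> simp [abs_mul] <;> exact hwabs t r
  -- (A) sign alignment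
  have hA : ∀ i, wstar i ≠ 0 → Tendsto (fun t => y t i * sgn' (wstar i)) atTop atTop := by
    intro i hi
    have hσ := sgn'_cases (wstar i)
    have hwσ : wstar i * sgn' (wstar i) = |wstar i| := mul_sgn' _ hi
    have habs0 : 0 < |wstar i| := abs_pos.mpr hi
    apply mono_key η hη0 hηsum _ (fun t => a * ∑ r, y t r * w t r)
      (Tendsto.const_mul_atTop hapos hGtend) (c * |wstar i|) (ηbar * c) (mul_pos hc0 habs0)
      (le_of_lt (mul_pos hηbar0 hc0))
    intro t
    have hstep : y (t+1) i * sgn' (wstar i)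
        = y t i * sgn' (wstar i) + η t * c * (|wstar i| - sgn' (wstar i) * w t i) := by
      rw [hy, ← hwσ]; ring
    by_cases hcase : 0 < sgn' (wstar i) * w t i
    · right
      refine ⟨hKEY2 t i _ hσ hcase, ?_⟩
      have h1 : sgn' (wstar i) * w t i ≤ 1 := le_trans (le_abs_self _) (hσw t i _ hσ)
      rw [hstep]
      have hX : (-1 : ℝ) ≤ |wstar i| - sgn' (wstar i) * w t i := by
        linarith [abs_nonneg (wstar i)]
      have hm := mul_le_mul_of_nonneg_left hX (hηc t)
      have he1 : η t * c * (-1 : ℝ) = -(η t * c) := by ring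
      linarith [hηcb t]
    · left
      push_neg at hcase
      rw [hstep]
      have hX : |wstar i| ≤ |wstar i| - sgn' (wstar i) * w t i := by linarith
      have hm := mul_le_mul_of_nonneg_left hX (hηc t)
      have he1 : η t * (c * |wstar i|) = η t * c * |wstar i| := by ring
      linarith
  -- (B) order separation
  have hB : ∀ i j, wstar i ≠ 0 → wstar j ≠ 0 → |wstar i| < |wstar j| →
      Tendsto (fun t => y t j * sgn' (wstar j) - y t i * sgn' (wstar i)) atTop atTop := by
    intro i j hi hj hij
    have hσi := sgn'_cases (wstar i)
    have hσj := sgn'_cases (wstar j)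
    have hwσi : wstar i * sgn' (wstar i) = |wstar i| := mul_sgn' _ hi
    have hwσj : wstar j * sgn' (wstar j) = |wstar j| := mul_sgn' _ hj
    apply mono_key η hη0 hηsum _ (fun t => e * ∑ r, y t r * w t r)
      (Tendsto.const_mul_atTop hepos hGtend) (c * (|wstar j| - |wstar i|)) (2 * ηbar * c)
      (mul_pos hc0 (by linarith)) (by positivity)
    intro t
    have hstep : y (t+1) j * sgn' (wstar j) - y (t+1) i * sgn' (wstar i)
        = (y t j * sgn' (wstar j) - y t i * sgn' (wstar i))
          + η t * c * ((|wstar j| - |wstar i|)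
            - (sgn' (wstar j) * w t j - sgn' (wstar i) * w t i)) := by
      rw [hy, hy, ← hwσi, ← hwσj]; ring
    by_cases hcase : sgn' (wstar i) * w t i < sgn' (wstar j) * w t j
    · right
      refine ⟨hKEY t i j _ _ hσi hσj hcase, ?_⟩
      have h1 : sgn' (wstar j) * w t j ≤ 1 := le_trans (le_abs_self _) (hσw t j _ hσj)
      have h1' : -1 ≤ sgn' (wstar i) * w t i := by
        have := neg_abs_le (sgn' (wstar i) * w t i)
        linarith [hσw t i _ hσi]
      rw [hstep]
      have hX : (-2 : ℝ) ≤ (|wstar j| - |wstar i|)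
          - (sgn' (wstar j) * w t j - sgn' (wstar i) * w t i) := by linarith
      have hm := mul_le_mul_of_nonneg_left hX (hηc t)
      have he1 : η t * c * (-2 : ℝ) = -(2 * (η t * c)) := by ring
      linarith [hηcb t]
    · left
      push_neg at hcase
      rw [hstep]
      have hX : |wstar j| - |wstar i| ≤ (|wstar j| - |wstar i|)
          - (sgn' (wstar j) * w t j - sgn' (wstar i) * w t i) := by linarith
      have hm := mul_le_mul_of_nonneg_left hX (hηc t)
      have he1 : η t * (c * (|wstar j| - |wstar i|)) = η t * c * (|wstar j| - |wstar i|) := by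
        ring
      linarith
  -- (C) balance for equal magnitudes
  have hC : ∀ i j, wstar i ≠ 0 → wstar j ≠ 0 → |wstar i| = |wstar j| →
      ∃ B, ∀ t, |y t j * sgn' (wstar j) - y t i * sgn' (wstar i)| ≤ B := by
    intro i j hi hj hij
    have hσi := sgn'_cases (wstar i)
    have hσj := sgn'_cases (wstar j)
    have hwσi : wstar i * sgn' (wstar i) = |wstar i| := mul_sgn' _ hi
    have hwσj : wstar j * sgn' (wstar j) = |wstar j| := mul_sgn' _ hj
    refine ⟨max |y 0 j * sgn' (wstar j) - y 0 i * sgn' (wstar i)| (2 * ηbar * c), ?_⟩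
    intro t
    induction t with
    | zero => exact le_max_left _ _
    | succ t ih =>
      have hBige : 2 * ηbar * c
          ≤ max |y 0 j * sgn' (wstar j) - y 0 i * sgn' (wstar i)| (2 * ηbar * c) :=
        le_max_right _ _
      set D := y t j * sgn' (wstar j) - y t i * sgn' (wstar i) with hD
      set P := sgn' (wstar j) * w t j with hP
      set Q := sgn' (wstar i) * w t i with hQdef
      have h0 : |wstar j| - |wstar i| = 0 := by rw [hij]; ring
      have hstep : y (t+1) j * sgn' (wstar j) - y (t+1) i * sgn' (wstar i)
          = D + η t * c * ((|wstar j| - |wstar i|) - (P - Q)) := by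
        rw [hy, hy, ← hwσi, ← hwσj, hD, hP, hQdef]; ring
      rw [hstep, h0]
      have hPle : P ≤ 1 := le_trans (le_abs_self _) (hσw t j _ hσj)
      have hPge : -1 ≤ P := by
        have := neg_abs_le P; linarith [hσw t j _ hσj]
      have hQle : Q ≤ 1 := le_trans (le_abs_self _) (hσw t i _ hσi)
      have hQge : -1 ≤ Q := by
        have := neg_abs_le Q; linarith [hσw t i _ hσi]
      have heG := mul_nonneg hepos.le (hG0 t)
      rw [abs_le] at ih ⊢
      rcases lt_trichotomy Q P with hc1 | hc1 | hc1
      · have h1 := hKEY t i j _ _ hσi hσj hc1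
        rw [← hD] at h1
        have hDpos : 0 ≤ D := le_trans heG h1
        have hX1 : (-2 : ℝ) ≤ 0 - (P - Q) := by linarith
        have hX2 : 0 - (P - Q) ≤ 0 := by linarith
        have hm1 := mul_le_mul_of_nonneg_left hX1 (hηc t)
        have hm2 := mul_le_mul_of_nonneg_left hX2 (hηc t)
        have he1 : η t * c * (-2 : ℝ) = -(2 * (η t * c)) := by ring
        have he2 : η t * c * (0 : ℝ) = 0 := by ring
        constructor
        · linarith [hηcb t]
        · linarith [ih.2]
      · have hz : η t * c * (0 - (P - Q)) = 0 := by rw [hc1]; ring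
        constructor
        · linarith [ih.1, hz]
        · linarith [ih.2, hz]
      · have h1 := hKEY t j i _ _ hσj hσi hc1
        have hDneg : D ≤ 0 := by
          rw [hD]; linarith [heG, h1]
        have hX1 : (0 : ℝ) ≤ 0 - (P - Q) := by linarith
        have hX2 : 0 - (P - Q) ≤ 2 := by linarith
        have hm1 := mul_le_mul_of_nonneg_left hX1 (hηc t)
        have hm2 := mul_le_mul_of_nonneg_left hX2 (hηc t)
        have he1 : η t * c * (0 : ℝ) = 0 := by ring
        have he2 : η t * c * (2 : ℝ) = 2 * (η t * c) := by ring
        constructor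
        · linarith [ih.1]
        · linarith [hηcb t]
  -- (D) zero coordinates stay bounded
  have hD : ∀ i, wstar i = 0 → ∃ B, ∀ t, |y t i| ≤ B := by
    intro i hi
    refine ⟨max |y 0 i| (ηbar * c), fun t => ?_⟩
    induction t with
    | zero => exact le_max_left _ _
    | succ t ih =>
      have hstep : y (t+1) i = y t i - η t * c * w t i := by rw [hy, hi]; ring
      have h1 : 0 ≤ y t i * (η t * c * w t i) := by
        have h2 := hyw0 t i
        have h3 : y t i * (η t * c * w t i) = (η t * c) * (y t i * w t i) := by ring
        rw [h3]
        exact mul_nonneg (hηc t) h2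
      have h2 := abs_sub_le_max (y t i) (η t * c * w t i) h1
      have h3 : |η t * c * w t i| ≤ ηbar * c := by
        rw [abs_mul, abs_mul, abs_of_pos (hη0 t), abs_of_pos hc0]
        calc η t * c * |w t i| ≤ η t * c * 1 :=
              mul_le_mul_of_nonneg_left (hwabs t i) (hηc t)
          _ = η t * c := mul_one _
          _ ≤ ηbar * c := hηcb t
      rw [hstep]
      calc |y t i - η t * c * w t i| ≤ max |y t i| |η t * c * w t i| := h2
        _ ≤ max |y 0 i| (ηbar * c) := max_le ih (le_trans h3 (le_max_right _ _))
  exact ⟨hA, hB, hC, hD, hEtend⟩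
lemma abs_eq_mul_sgn' (z σ : ℝ) (h : σ = 1 ∨ σ = -1) (h2 : 0 ≤ z * σ) : |z| = z * σ := by
  rcases h with rfl | rfl
  · rw [mul_one] at h2 ⊢; exact abs_of_nonneg h2
  · have hz : z ≤ 0 := by nlinarith
    rw [abs_of_nonpos hz]; ring

theorem stmt12 (n m : ℕ) (hn : 1 ≤ n)
    (wstar : Fin n → ℝ) (hws : euclNorm wstar = 1) (hQ : ¬ InQ3 wstar)
    (v : Fin m → ℝ) (hv : v ≠ 0)
    (c : ℝ) (hc : c = euclNorm v ^ 2 / (2 * Real.sqrt (2 * π)))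
    (η : ℕ → ℝ) (ηbar : ℝ) (hη0 : ∀ t, 0 < η t) (hηb : ∀ t, η t ≤ ηbar)
    (hηsum : Tendsto (fun T => ∑ t ∈ Finset.range T, η t) atTop atTop)
    (y w : ℕ → Fin n → ℝ)
    (hproj : ∀ t, IsNTernProj (y t) (w t))
    (hy : ∀ t i, y (t + 1) i = y t i + η t * c * (wstar i - w t i)) :
    (∀ tk : ℕ → ℕ, StrictMono tk → (∀ k, y (tk k) ≠ 0) →
      ∀ u : Fin n → ℝ,
        Tendsto (fun k => fun i => y (tk k) i / euclNorm (y (tk k))) atTop (nhds u) →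
        u ∈ closure (ConeOf wstar)) ∧
    (((∀ i, wstar i ≠ 0) ∧ (∀ i j, i ≠ j → |wstar i| ≠ |wstar j|)) →
      {t | y t ∉ ConeOf wstar}.Finite) := by
  have hc0 : 0 < c := by
    rw [hc]
    apply div_pos (pow_pos (euclNorm_pos_of_ne_zero v hv) 2)
    have h1 : 0 < Real.sqrt (2 * π) := Real.sqrt_pos.mpr (by positivity)
    linarith
  obtain ⟨hA, hB, hC, hD, hE⟩ := core hn wstar hws hQ c hc0 η ηbar hη0 hηb hηsum y w hproj hy
  constructor
  · -- part (i)
    intro tk htk hne u hu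
    have htkT : Tendsto tk atTop atTop := htk.tendsto_atTop
    have hrpos : ∀ kk, 0 < euclNorm (y (tk kk)) := fun kk =>
      euclNorm_pos_of_ne_zero _ (hne kk)
    have hr : Tendsto (fun kk => euclNorm (y (tk kk))) atTop atTop := hE.comp htkT
    have hui : ∀ i, Tendsto (fun kk => y (tk kk) i / euclNorm (y (tk kk))) atTop (nhds (u i)) :=
      fun i => (tendsto_pi_nhds.mp hu) i
    -- (1) zero coordinates
    have huz : ∀ i, wstar i = 0 → u i = 0 := by
      intro i hi
      obtain ⟨B, hb⟩ := hD i hi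
      have h1 : Tendsto (fun kk => y (tk kk) i / euclNorm (y (tk kk))) atTop (nhds 0) := by
        refine squeeze_zero_norm (a := fun kk => B / euclNorm (y (tk kk))) (fun kk => ?_) (Tendsto.div_atTop tendsto_const_nhds hr)
        rw [Real.norm_eq_abs, abs_div, abs_of_pos (hrpos kk)]
        exact div_le_div_of_nonneg_right (hb (tk kk)) (hrpos kk).le
      exact tendsto_nhds_unique (hui i) h1
    -- limit of signed coordinates
    have huiσ : ∀ i, Tendsto (fun kk => y (tk kk) i * sgn' (wstar i) / euclNorm (y (tk kk)))
        atTop (nhds (u i * sgn' (wstar i))) := by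
      intro i
      have h1 := (hui i).mul_const (sgn' (wstar i))
      have h2 : (fun kk => y (tk kk) i / euclNorm (y (tk kk)) * sgn' (wstar i))
          = fun kk => y (tk kk) i * sgn' (wstar i) / euclNorm (y (tk kk)) := by
        funext kk; ring
      rwa [h2] at h1
    -- (2) sign nonnegativity
    have hnn : ∀ i, wstar i ≠ 0 → 0 ≤ u i * sgn' (wstar i) := by
      intro i hi
      apply ge_of_tendsto (huiσ i)
      have h1 := (hA i hi).eventually_ge_atTop 0
      filter_upwards [htkT.eventually h1] with kk hk
      exact div_nonneg hk (hrpos kk).le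
    -- (3) order
    have horder : ∀ i j, wstar i ≠ 0 → wstar j ≠ 0 → |wstar i| < |wstar j| →
        u i * sgn' (wstar i) ≤ u j * sgn' (wstar j) := by
      intro i j hi hj hij
      have hT : Tendsto (fun kk => (y (tk kk) j * sgn' (wstar j)
          - y (tk kk) i * sgn' (wstar i)) / euclNorm (y (tk kk))) atTop
          (nhds (u j * sgn' (wstar j) - u i * sgn' (wstar i))) := by
        have h1 := (huiσ j).sub (huiσ i)
        have h2 : (fun kk => y (tk kk) j * sgn' (wstar j) / euclNorm (y (tk kk))
            - y (tk kk) i * sgn' (wstar i) / euclNorm (y (tk kk)))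
            = fun kk => (y (tk kk) j * sgn' (wstar j)
              - y (tk kk) i * sgn' (wstar i)) / euclNorm (y (tk kk)) := by
          funext kk; ring
        rwa [h2] at h1
      have h3 : 0 ≤ u j * sgn' (wstar j) - u i * sgn' (wstar i) := by
        apply ge_of_tendsto hT
        have h1 := (hB i j hi hj hij).eventually_ge_atTop 0
        filter_upwards [htkT.eventually h1] with kk hk
        exact div_nonneg hk (hrpos kk).le
      linarith
    -- (4) equal magnitudes
    have heq : ∀ i j, wstar i ≠ 0 → wstar j ≠ 0 → |wstar i| = |wstar j| →
        u j * sgn' (wstar j) = u i * sgn' (wstar i) := by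
      intro i j hi hj hij
      obtain ⟨B, hb⟩ := hC i j hi hj hij
      have hT : Tendsto (fun kk => (y (tk kk) j * sgn' (wstar j)
          - y (tk kk) i * sgn' (wstar i)) / euclNorm (y (tk kk))) atTop
          (nhds (u j * sgn' (wstar j) - u i * sgn' (wstar i))) := by
        have h1 := (huiσ j).sub (huiσ i)
        have h2 : (fun kk => y (tk kk) j * sgn' (wstar j) / euclNorm (y (tk kk))
            - y (tk kk) i * sgn' (wstar i) / euclNorm (y (tk kk)))
            = fun kk => (y (tk kk) j * sgn' (wstar j)
              - y (tk kk) i * sgn' (wstar i)) / euclNorm (y (tk kk)) := by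
          funext kk; ring
        rwa [h2] at h1
      have h0 : Tendsto (fun kk => (y (tk kk) j * sgn' (wstar j)
          - y (tk kk) i * sgn' (wstar i)) / euclNorm (y (tk kk))) atTop (nhds 0) := by
        refine squeeze_zero_norm (a := fun kk => B / euclNorm (y (tk kk))) (fun kk => ?_) (Tendsto.div_atTop tendsto_const_nhds hr)
        rw [Real.norm_eq_abs, abs_div, abs_of_pos (hrpos kk)]
        exact div_le_div_of_nonneg_right (hb (tk kk)) (hrpos kk).le
      have := tendsto_nhds_unique hT h0
      linarith
    -- membership of perturbed points
    have hmem : ∀ mm : ℕ, (fun i => u i + (1 / ((mm : ℝ) + 1)) * wstar i) ∈ ConeOf wstar := by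
      intro mm
      set τ : ℝ := 1 / ((mm : ℝ) + 1) with hτ
      have hτ0 : 0 < τ := by rw [hτ]; positivity
      -- per-coordinate facts
      have hcoord : ∀ i, (wstar i = 0 ∧ u i + τ * wstar i = 0) ∨
          (wstar i ≠ 0 ∧ 0 < (u i + τ * wstar i) * sgn' (wstar i) ∧
            |u i + τ * wstar i| = u i * sgn' (wstar i) + τ * |wstar i|) := by
        intro i
        rcases eq_or_ne (wstar i) 0 with hi | hi
        · left
          exact ⟨hi, by rw [hi, huz i hi]; ring⟩
        · right
          refine ⟨hi, ?_, ?_⟩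
          · have h1 := hnn i hi
            have h2 : wstar i * sgn' (wstar i) = |wstar i| := mul_sgn' _ hi
            have h3 : 0 < |wstar i| := abs_pos.mpr hi
            have h4 : (u i + τ * wstar i) * sgn' (wstar i)
                = u i * sgn' (wstar i) + τ * (wstar i * sgn' (wstar i)) := by ring
            rw [h4, h2]
            nlinarith
          · have h1 := hnn i hi
            have h2 : wstar i * sgn' (wstar i) = |wstar i| := mul_sgn' _ hi
            have h3 : 0 < |wstar i| := abs_pos.mpr hi
            have h4 : (u i + τ * wstar i) * sgn' (wstar i)
                = u i * sgn' (wstar i) + τ * (wstar i * sgn' (wstar i)) := by ring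
            have h5 : 0 ≤ (u i + τ * wstar i) * sgn' (wstar i) := by rw [h4, h2]; nlinarith
            rw [abs_eq_mul_sgn' _ _ (sgn'_cases _) h5, h4, h2]
      refine ⟨fun i => ?_, fun i j => ?_⟩
      · -- orthant signs
        show Real.sign (u i + τ * wstar i) = Real.sign (wstar i)
        rcases hcoord i with ⟨hi, hz⟩ | ⟨hi, hpos, _⟩
        · rw [hz, hi]
        · rcases lt_trichotomy (wstar i) 0 with hw | hw | hw
          · have hσ : sgn' (wstar i) = -1 := by rw [sgn', if_neg (by linarith)]
            rw [hσ] at hpos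
            have : u i + τ * wstar i < 0 := by nlinarith
            rw [Real.sign_of_neg this, Real.sign_of_neg hw]
          · exact absurd hw hi
          · have hσ : sgn' (wstar i) = 1 := by rw [sgn', if_pos hw]
            rw [hσ, mul_one] at hpos
            rw [Real.sign_of_pos hpos, Real.sign_of_pos hw]
      · -- order signs
        show Real.sign (|u j + τ * wstar j| - |u i + τ * wstar i|)
          = Real.sign (|wstar j| - |wstar i|)
        rcases hcoord i with ⟨hi, hzi⟩ | ⟨hi, hposi, habsi⟩ <;>
          rcases hcoord j with ⟨hj, hzj⟩ | ⟨hj, hposj, habsj⟩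
        · rw [hzi, hzj, hi, hj]
        · -- wstar i = 0, wstar j ≠ 0
          rw [hzi, hi, abs_zero, sub_zero, sub_zero]
          have h1 : 0 < |u j + τ * wstar j| := by
            rw [habsj]
            have := hnn j hj
            have := abs_pos.mpr hj
            nlinarith
          rw [Real.sign_of_pos h1, Real.sign_of_pos (abs_pos.mpr hj)]
        · -- wstar i ≠ 0, wstar j = 0
          rw [hzj, hj, abs_zero, zero_sub, zero_sub]
          have h1 : 0 < |u i + τ * wstar i| := by
            rw [habsi]
            have := hnn i hi
            have := abs_pos.mpr hi
            nlinarith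
          rw [Real.sign_of_neg (by linarith), Real.sign_of_neg (by linarith [abs_pos.mpr hi])]
        · -- both nonzero
          rw [habsi, habsj]
          rcases lt_trichotomy |wstar i| |wstar j| with hw | hw | hw
          · have h1 := horder i j hi hj hw
            rw [Real.sign_of_pos (by nlinarith), Real.sign_of_pos (by linarith)]
          · have h1 := heq i j hi hj hw
            have h2 : u j * sgn' (wstar j) + τ * |wstar j|
                - (u i * sgn' (wstar i) + τ * |wstar i|) = 0 := by rw [h1, hw]; ring
            rw [h2, show |wstar j| - |wstar i| = 0 by rw [hw]; ring]
          · have h1 := horder j i hj hi hw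
            rw [Real.sign_of_neg (by nlinarith), Real.sign_of_neg (by linarith)]
    -- closure
    have hten : Tendsto (fun mm : ℕ => fun i => u i + (1 / ((mm : ℝ) + 1)) * wstar i)
        atTop (nhds u) := by
      rw [tendsto_pi_nhds]
      intro i
      have h1 : Tendsto (fun mm : ℕ => (1 / ((mm : ℝ) + 1)) * wstar i) atTop (nhds 0) := by
        have := tendsto_one_div_add_atTop_nhds_zero_nat.mul_const (wstar i)
        simpa using this
      have h2 := tendsto_const_nhds (x := u i) (f := atTop (α := ℕ)) |>.add h1
      simpa using h2
    exact mem_closure_of_tendsto hten (Eventually.of_forall hmem)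
  · -- part (ii)
    rintro ⟨hnz, hdist⟩
    have habsσ : ∀ t i, 0 < y t i * sgn' (wstar i) → |y t i| = y t i * sgn' (wstar i) :=
      fun t i h => abs_eq_mul_sgn' _ _ (sgn'_cases _) h.le
    have hev : ∀ᶠ t in atTop, y t ∈ ConeOf wstar := by
      have e1 : ∀ᶠ t in atTop, ∀ i, Real.sign (y t i) = Real.sign (wstar i) := by
        rw [eventually_all]
        intro i
        have h1 := (hA i (hnz i)).eventually_gt_atTop 0
        filter_upwards [h1] with t ht
        rcases lt_trichotomy (wstar i) 0 with hw | hw | hw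
        · have hσ : sgn' (wstar i) = -1 := by rw [sgn', if_neg (by linarith)]
          rw [hσ] at ht
          have : y t i < 0 := by nlinarith
          rw [Real.sign_of_neg this, Real.sign_of_neg hw]
        · exact absurd hw (hnz i)
        · have hσ : sgn' (wstar i) = 1 := by rw [sgn', if_pos hw]
          rw [hσ, mul_one] at ht
          rw [Real.sign_of_pos ht, Real.sign_of_pos hw]
      have e2 : ∀ᶠ t in atTop, ∀ i j,
          Real.sign (|y t j| - |y t i|) = Real.sign (|wstar j| - |wstar i|) := by
        rw [eventually_all]
        intro i
        rw [eventually_all]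
        intro j
        rcases eq_or_ne i j with rfl | hij
        · exact Eventually.of_forall fun t => by simp
        · rcases (hdist i j hij).lt_or_gt with hlt | hlt
          · have h1 := (hB i j (hnz i) (hnz j) hlt).eventually_gt_atTop 0
            have h2 := (hA i (hnz i)).eventually_gt_atTop 0
            have h3 := (hA j (hnz j)).eventually_gt_atTop 0
            filter_upwards [h1, h2, h3] with t ht1 ht2 ht3
            rw [habsσ t i ht2, habsσ t j ht3, Real.sign_of_pos (by linarith),
              Real.sign_of_pos (by linarith)]
          · have h1 := (hB j i (hnz j) (hnz i) hlt).eventually_gt_atTop 0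
            have h2 := (hA i (hnz i)).eventually_gt_atTop 0
            have h3 := (hA j (hnz j)).eventually_gt_atTop 0
            filter_upwards [h1, h2, h3] with t ht1 ht2 ht3
            rw [habsσ t i ht2, habsσ t j ht3, Real.sign_of_neg (by linarith),
              Real.sign_of_neg (by linarith)]
      filter_upwards [e1, e2] with t h1 h2
      exact ⟨h1, h2⟩
    rw [← Nat.cofinite_eq_atTop] at hev
    exact eventually_cofinite.mp hev
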